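/- Let n ≥ 1 and N ≥ n, and let L be a set of n×n real matrices. Let V = {(X_1,…,X_N) ∈ (ℝ^n)^N : X_1, …, X_n are linearly independent in ℝ^n}. If f : V → ℝ^n is a differentiable map satisfying the joint equivariance equation for every l ∈ L, then there exist differentiable functions φ¹, …, φⁿ : V → ℝ such that f(X) = Σ_{i=1}^n φ^i(X)·X_i for every X ∈ V, and each φ^i is jointly radial for every l ∈ L. -/

import Mathlib

open scoped Matrix


/-- A map `f` satisfies the joint equivariance equation for the matrix `l` at every
point of `U` if `Df(X)(l·X_1, …, l·X_N) = l·f(X)` on `U`. -/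
def JointlyEquivariantOn (n N : ℕ) (l : Matrix (Fin n) (Fin n) ℝ)
    (U : Set (Fin N → Fin n → ℝ)) (f : (Fin N → Fin n → ℝ) → (Fin n → ℝ)) : Prop :=
  ∀ X ∈ U, fderiv ℝ f X (fun i => l.mulVec (X i)) = l.mulVec (f X)

/-- A function `φ` is jointly radial for `l` on `U` if `Dφ(X)(l·X_1, …, l·X_N) = 0`
on `U`. -/
def JointlyRadialOn (n N : ℕ) (l : Matrix (Fin n) (Fin n) ℝ)
    (U : Set (Fin N → Fin n → ℝ)) (φ : (Fin N → Fin n → ℝ) → ℝ) : Prop :=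
  ∀ X ∈ U, fderiv ℝ φ X (fun i => l.mulVec (X i)) = 0

section Aux

variable {E : Type*} [NormedAddCommGroup E] [NormedSpace ℝ E]

lemma aux_diffAt_finset_prod {ι : Type*} [DecidableEq ι] {u : Finset ι}
    {g : ι → E → ℝ} {x : E} (hg : ∀ i ∈ u, DifferentiableAt ℝ (g i) x) :
    DifferentiableAt ℝ (fun y => ∏ i ∈ u, g i y) x :=
  (HasFDerivAt.finset_prod fun i hi => (hg i hi).hasFDerivAt).differentiableAt

lemma aux_diffAt_det {m : ℕ} {g : E → Matrix (Fin m) (Fin m) ℝ} {x : E}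
    (hg : ∀ i j, DifferentiableAt ℝ (fun y => g y i j) x) :
    DifferentiableAt ℝ (fun y => (g y).det) x := by
  simp only [Matrix.det_apply']
  exact DifferentiableAt.fun_sum fun σ _ =>
    (aux_diffAt_finset_prod fun i _ => hg (σ i) i).const_mul _

lemma aux_diff_eval {N n : ℕ} (a : Fin N) (b : Fin n) :
    Differentiable ℝ (fun Y : Fin N → Fin n → ℝ => Y a b) := by
  have : (fun Y : Fin N → Fin n → ℝ => Y a b) =
      (ContinuousLinearMap.proj (R := ℝ) (φ := fun _ : Fin n => ℝ) b).comp
        (ContinuousLinearMap.proj (R := ℝ) (φ := fun _ : Fin N => Fin n → ℝ) a) := rfl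
  rw [this]
  exact ContinuousLinearMap.differentiable _

end Aux

/-- If `N ≥ n` and `f` is jointly equivariant for every `l ∈ L`
on the set `V` where `X_1, …, X_n` are linearly independent, then `f` is a
combination `f(X) = Σ_i φ^i(X) • X_i` of the elementary solutions `X_1, …, X_n`
with differentiable, jointly radial coefficients `φ^i`. -/
theorem stmt_5 (n N : ℕ) (hn : 1 ≤ n) (hnN : n ≤ N)
    (L : Set (Matrix (Fin n) (Fin n) ℝ))
    (V : Set (Fin N → Fin n → ℝ))
    (hV : V = {X | LinearIndependent ℝ (fun j : Fin n => X (Fin.castLE hnN j))})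
    (f : (Fin N → Fin n → ℝ) → (Fin n → ℝ))
    (hf_diff : ∀ X ∈ V, DifferentiableAt ℝ f X)
    (hf_equiv : ∀ l ∈ L, JointlyEquivariantOn n N l V f) :
    ∃ φ : Fin n → (Fin N → Fin n → ℝ) → ℝ,
      (∀ i, ∀ X ∈ V, DifferentiableAt ℝ (φ i) X) ∧
      (∀ X ∈ V, f X = ∑ i, φ i X • X (Fin.castLE hnN i)) ∧
      (∀ i, ∀ l ∈ L, JointlyRadialOn n N l V (φ i)) := by
  classical
  -- The matrix whose columns are X_1, ..., X_n.
  set A : (Fin N → Fin n → ℝ) → Matrix (Fin n) (Fin n) ℝ :=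
    fun X i j => X (Fin.castLE hnN j) i with hA
  -- membership in V iff det (A X) ≠ 0
  have hViff : ∀ X, X ∈ V ↔ (A X).det ≠ 0 := by
    intro X
    rw [hV, Set.mem_setOf_eq]
    have hcols : (fun j : Fin n => X (Fin.castLE hnN j)) = (A X).col := by
      funext j; rfl
    rw [hcols, Matrix.linearIndependent_cols_iff_isUnit,
      Matrix.isUnit_iff_isUnit_det, isUnit_iff_ne_zero]
  have hVdet : ∀ X ∈ V, (A X).det ≠ 0 := fun X hX => (hViff X).1 hX
  -- V is open
  have hdetCont : Continuous fun X => (A X).det := by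
    apply Continuous.matrix_det
    exact continuous_pi fun i => continuous_pi fun j =>
      (continuous_apply i).comp (continuous_apply (Fin.castLE hnN j))
  have hVopen : IsOpen V := by
    have : V = (fun X => (A X).det) ⁻¹' ({0}ᶜ) := by
      ext X; simp [hViff X, Set.mem_preimage]
    rw [this]
    exact isOpen_compl_singleton.preimage hdetCont
  -- The coefficient functions, via Cramer's rule.
  set φ : Fin n → (Fin N → Fin n → ℝ) → ℝ :=
    fun i X => ((A X).det)⁻¹ * Matrix.cramer (A X) (f X) i with hφ
  -- differentiability of φ
  have hφdiff : ∀ i, ∀ X ∈ V, DifferentiableAt ℝ (φ i) X := by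
    intro i X hX
    have hdet : DifferentiableAt ℝ (fun Y => (A Y).det) X :=
      aux_diffAt_det fun k j => (aux_diff_eval (Fin.castLE hnN j) k) X
    have hfk : ∀ k : Fin n, DifferentiableAt ℝ (fun Y => f Y k) X := fun k =>
      (ContinuousLinearMap.proj (R := ℝ) (φ := fun _ : Fin n => ℝ)
        k).differentiableAt.comp X (hf_diff X hX)
    have hcr : DifferentiableAt ℝ (fun Y => Matrix.cramer (A Y) (f Y) i) X := by
      have : (fun Y => Matrix.cramer (A Y) (f Y) i) =
          fun Y => ((A Y).updateCol i (f Y)).det := by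
        funext Y; rw [Matrix.cramer_apply]
      rw [this]
      apply aux_diffAt_det
      intro k j
      by_cases hji : j = i
      · subst hji
        simp only [Matrix.updateCol_apply, if_pos rfl]
        exact hfk k
      · simp only [Matrix.updateCol_apply, if_neg hji]
        exact (aux_diff_eval (Fin.castLE hnN j) k) X
    exact (hdet.inv (hVdet X hX)).mul hcr
  -- representation
  have hrep : ∀ X ∈ V, f X = ∑ i, φ i X • X (Fin.castLE hnN i) := by
    intro X hX
    funext k
    have h := congrFun (Matrix.mulVec_cramer (A X) (f X)) k
    have hmv : (A X *ᵥ Matrix.cramer (A X) (f X)) k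
        = ∑ j, X (Fin.castLE hnN j) k * Matrix.cramer (A X) (f X) j := by
      simp [Matrix.mulVec, dotProduct, hA]
    rw [hmv] at h
    have hd := hVdet X hX
    have : (∑ i, φ i X • X (Fin.castLE hnN i)) k
        = ((A X).det)⁻¹ * ∑ j, X (Fin.castLE hnN j) k * Matrix.cramer (A X) (f X) j := by
      rw [Finset.mul_sum]
      simp only [Finset.sum_apply, Pi.smul_apply, smul_eq_mul, hφ]
      exact Finset.sum_congr rfl fun j _ => by ring
    rw [this, h]
    simp only [Pi.smul_apply, smul_eq_mul]
    field_simp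
  refine ⟨φ, hφdiff, hrep, ?_⟩
  -- joint radiality
  intro i0 l hl X hX
  set W : Fin N → Fin n → ℝ := fun j => l.mulVec (X j) with hW
  set c : Fin n → ℝ := fun i => fderiv ℝ (φ i) X W with hc
  -- f agrees with the combination near X
  have hev : f =ᶠ[nhds X] fun Y => ∑ i, φ i Y • Y (Fin.castLE hnN i) :=
    Filter.eventually_of_mem (hVopen.mem_nhds hX) fun Y hY => hrep Y hY
  have hterm : ∀ i : Fin n, DifferentiableAt ℝ
      (fun Y => φ i Y • Y (Fin.castLE hnN i)) X := fun i =>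
    (hφdiff i X hX).smul
      ((ContinuousLinearMap.proj (R := ℝ)
        (φ := fun _ : Fin N => Fin n → ℝ) (Fin.castLE hnN i)).differentiableAt)
  have hfd : fderiv ℝ f X = fderiv ℝ (fun Y => ∑ i, φ i Y • Y (Fin.castLE hnN i)) X :=
    hev.fderiv_eq
  have hsum : fderiv ℝ (fun Y => ∑ i, φ i Y • Y (Fin.castLE hnN i)) X
      = ∑ i, fderiv ℝ (fun Y => φ i Y • Y (Fin.castLE hnN i)) X :=
    fderiv_fun_sum fun i _ => hterm i
  have hproj : ∀ i : Fin n, fderiv ℝ (fun Y : Fin N → Fin n → ℝ => Y (Fin.castLE hnN i)) X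
      = ContinuousLinearMap.proj (R := ℝ) (φ := fun _ : Fin N => Fin n → ℝ)
          (Fin.castLE hnN i) := by
    intro i
    exact (ContinuousLinearMap.proj (R := ℝ)
      (φ := fun _ : Fin N => Fin n → ℝ) (Fin.castLE hnN i)).fderiv
  have htermW : ∀ i : Fin n,
      fderiv ℝ (fun Y => φ i Y • Y (Fin.castLE hnN i)) X W
        = φ i X • l.mulVec (X (Fin.castLE hnN i)) + c i • X (Fin.castLE hnN i) := by
    intro i
    have hd2 : DifferentiableAt ℝ (fun Y : Fin N → Fin n → ℝ => Y (Fin.castLE hnN i)) X :=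
      (ContinuousLinearMap.proj (R := ℝ)
        (φ := fun _ : Fin N => Fin n → ℝ) (Fin.castLE hnN i)).differentiableAt
    rw [fderiv_fun_smul (hφdiff i X hX) hd2]
    simp only [ContinuousLinearMap.add_apply, ContinuousLinearMap.smul_apply,
      ContinuousLinearMap.smulRight_apply, hproj i]
    rfl
  -- equivariance
  have heq : fderiv ℝ f X W = l.mulVec (f X) := hf_equiv l hl X hX
  have hLf : l.mulVec (f X) = ∑ i, φ i X • l.mulVec (X (Fin.castLE hnN i)) := by
    rw [hrep X hX]
    funext k
    simp only [Matrix.mulVec, dotProduct, Finset.sum_apply, Pi.smul_apply,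
      smul_eq_mul, Finset.mul_sum, Finset.sum_mul]
    rw [Finset.sum_comm]
    exact Finset.sum_congr rfl fun i _ => Finset.sum_congr rfl fun j _ => by ring
  have hzero : ∑ i, c i • X (Fin.castLE hnN i) = 0 := by
    have h1 : fderiv ℝ f X W
        = ∑ i, (φ i X • l.mulVec (X (Fin.castLE hnN i)) + c i • X (Fin.castLE hnN i)) := by
      rw [hfd, hsum]
      rw [ContinuousLinearMap.sum_apply]
      exact Finset.sum_congr rfl fun i _ => htermW i
    rw [heq, hLf, Finset.sum_add_distrib] at h1
    exact left_eq_add.mp h1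
  have hli : LinearIndependent ℝ (fun j : Fin n => X (Fin.castLE hnN j)) := by
    rw [hV] at hX; exact hX
  have := Fintype.linearIndependent_iff.mp hli c hzero i0
  exact this
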